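/- Let C be a finite set with N = |C| elements and let T be a set of N permutations of C such that for every c ∈ C the evaluation map T → C, t ↦ t(c), is a bijection. Let w₁, w₂ : C → ℝ be nonnegative functions with Σ_{c∈C} w₁(c) w₂(c) > 0, set Z₁ = Σ_c w₁(c), Z₂ = Σ_c w₂(c) and ΔZ = Σ_c w₁(c) w₂(c). Let t_1, …, t_M be independent random permutations, each uniformly distributed on T, let s ∈ {1,…,M}, and define ΔZ^j = Σ_{c∈C} w₁(t_j⁻¹(c)) · w₂(t_s⁻¹(c)) for each j. Then ΔZ^s = ΔZ almost surely, and the decoding error probability satisfies P( max_{j≠s} ΔZ^j ≥ ΔZ^s ) ≤ (M−1) · Z₁ Z₂ / (N · ΔZ). -/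

import Mathlib

open scoped Classical

lemma aux_sum_inv {C : Type*} [Fintype C] (T : Finset (Equiv.Perm C))
    (hbij : ∀ c : C, Set.BijOn (fun t : Equiv.Perm C => t c) ↑T Set.univ)
    (w : C → ℝ) (c : C) :
    ∑ t ∈ T, w (t⁻¹ c) = ∑ c' : C, w c' := by
  refine Finset.sum_bij (fun t _ => t⁻¹ c) (fun t _ => Finset.mem_univ _) ?_ ?_ (fun t _ => rfl)
  · intro t₁ h₁ t₂ h₂ h
    have h1 : t₁ (t₁⁻¹ c) = c := Equiv.apply_symm_apply t₁ c
    have h2 : t₂ (t₁⁻¹ c) = c := by rw [h]; exact Equiv.apply_symm_apply t₂ c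
    exact (hbij (t₁⁻¹ c)).injOn h₁ h₂ (h1.trans h2.symm)
  · intro x _
    obtain ⟨t, ht, htx⟩ := (hbij x).surjOn (Set.mem_univ c)
    simp only at htx
    exact ⟨t, ht, by rw [← htx]; simp⟩

lemma aux_pair_sum {α : Type*} [DecidableEq α] (T : Finset α) {M : ℕ} (j s : Fin M)
    (hjs : j ≠ s) (g h : α → ℝ) :
    ∑ f ∈ Fintype.piFinset (fun _ : Fin M => T), g (f j) * h (f s) =
      (T.card : ℝ) ^ (((Finset.univ.erase j).erase s).card) *
        ((∑ t ∈ T, g t) * (∑ t ∈ T, h t)) := by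
  classical
  set F : Fin M → α → ℝ := fun i x => if i = j then g x else if i = s then h x else 1 with hF
  have key : ∀ f : Fin M → α, (∏ i, F i (f i)) = g (f j) * h (f s) := by
    intro f
    have hsmem : s ∈ Finset.univ.erase j := Finset.mem_erase.2 ⟨hjs.symm, Finset.mem_univ s⟩
    rw [← Finset.mul_prod_erase Finset.univ _ (Finset.mem_univ j),
        ← Finset.mul_prod_erase _ _ hsmem]
    have : ∏ i ∈ (Finset.univ.erase j).erase s, F i (f i) = 1 := by
      apply Finset.prod_eq_one
      intro i hi
      have h1 := Finset.mem_erase.1 hi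
      have h2 := Finset.mem_erase.1 h1.2
      simp [hF, h2.1, h1.1]
    rw [this, hF]
    simp [hjs.symm, mul_assoc]
  calc ∑ f ∈ Fintype.piFinset (fun _ : Fin M => T), g (f j) * h (f s)
      = ∑ f ∈ Fintype.piFinset (fun _ : Fin M => T), ∏ i, F i (f i) := by
        exact Finset.sum_congr rfl fun f _ => (key f).symm
    _ = ∏ i, ∑ x ∈ T, F i x := Finset.sum_prod_piFinset T F
    _ = (T.card : ℝ) ^ (((Finset.univ.erase j).erase s).card) *
        ((∑ t ∈ T, g t) * (∑ t ∈ T, h t)) := by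
        have hsmem : s ∈ Finset.univ.erase j := Finset.mem_erase.2 ⟨hjs.symm, Finset.mem_univ s⟩
        rw [← Finset.mul_prod_erase Finset.univ _ (Finset.mem_univ j),
            ← Finset.mul_prod_erase _ _ hsmem]
        have h1 : ∑ x ∈ T, F j x = ∑ t ∈ T, g t := by simp [hF]
        have h2 : ∑ x ∈ T, F s x = ∑ t ∈ T, h t := by simp [hF, hjs.symm]
        have h3 : ∏ i ∈ (Finset.univ.erase j).erase s, ∑ x ∈ T, F i x
            = (T.card : ℝ) ^ (((Finset.univ.erase j).erase s).card) := by
          rw [Finset.prod_congr rfl (fun i hi => ?_), Finset.prod_const]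
          have h1 := Finset.mem_erase.1 hi
          have h2 := Finset.mem_erase.1 h1.2
          simp [hF, h2.1, h1.1]
        rw [h1, h2, h3]; ring

/-- Decoding error bound for approximation set coding (conditional on the
data). With `T` a transformation set of `N = |C|` permutations, nonnegative weights
`w₁, w₂` with joint partition function `ΔZ = Σ_c w₁(c)w₂(c) > 0`, and `M` independent
uniform transformations `t_1,…,t_M` (modelled as the uniform distribution on tuples
`f ∈ T^M`), the score of the sent message satisfies `ΔZ^s = ΔZ` always, and the
probability that some competing score `ΔZ^j`, `j ≠ s`, reaches `ΔZ^s` is at most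
`(M−1)·Z₁Z₂/(N·ΔZ)`. -/
theorem stmt_7 {C : Type*} [Fintype C] (T : Finset (Equiv.Perm C))
    (hcard : T.card = Fintype.card C)
    (hbij : ∀ c : C, Set.BijOn (fun t : Equiv.Perm C => t c) ↑T Set.univ)
    (w₁ w₂ : C → ℝ) (hw₁ : ∀ c, 0 ≤ w₁ c) (hw₂ : ∀ c, 0 ≤ w₂ c)
    (hΔ : 0 < ∑ c : C, w₁ c * w₂ c)
    (M : ℕ) (s : Fin M) :
    (∀ f ∈ Fintype.piFinset (fun _ : Fin M => T),
        ∑ c : C, w₁ ((f s)⁻¹ c) * w₂ ((f s)⁻¹ c) = ∑ c : C, w₁ c * w₂ c) ∧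
    (((Fintype.piFinset (fun _ : Fin M => T)).filter
          (fun f => ∃ j, j ≠ s ∧
            (∑ c : C, w₁ ((f s)⁻¹ c) * w₂ ((f s)⁻¹ c)) ≤
              ∑ c : C, w₁ ((f j)⁻¹ c) * w₂ ((f s)⁻¹ c))).card / (T.card ^ M : ℝ) ≤
      ((M : ℝ) - 1) * (∑ c : C, w₁ c) * (∑ c : C, w₂ c) /
        ((Fintype.card C : ℝ) * ∑ c : C, w₁ c * w₂ c)) := by
  classical
  have part1 : ∀ f ∈ Fintype.piFinset (fun _ : Fin M => T),
      ∑ c : C, w₁ ((f s)⁻¹ c) * w₂ ((f s)⁻¹ c) = ∑ c : C, w₁ c * w₂ c := by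
    intro f _
    exact Equiv.sum_comp ((f s)⁻¹) (fun c => w₁ c * w₂ c)
  refine ⟨part1, ?_⟩
  set D : ℝ := ∑ c : C, w₁ c * w₂ c with hD
  set Z₁ : ℝ := ∑ c : C, w₁ c with hZ1
  set Z₂ : ℝ := ∑ c : C, w₂ c with hZ2
  have hZ1n : 0 ≤ Z₁ := Finset.sum_nonneg fun c _ => hw₁ c
  have hZ2n : 0 ≤ Z₂ := Finset.sum_nonneg fun c _ => hw₂ c
  -- C is nonempty, so card positive
  have hNpos : 0 < Fintype.card C := by
    rcases isEmpty_or_nonempty C with h | h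
    · simp [hD, Finset.univ_eq_empty] at hΔ
    · exact Fintype.card_pos
  have hTpos : 0 < T.card := hcard ▸ hNpos
  have hMpos : 0 < M := s.pos
  set P := Fintype.piFinset (fun _ : Fin M => T) with hP
  set X : Fin M → (Fin M → Equiv.Perm C) → ℝ :=
    fun j f => ∑ c : C, w₁ ((f j)⁻¹ c) * w₂ ((f s)⁻¹ c) with hX
  have hXnonneg : ∀ j f, 0 ≤ X j f :=
    fun j f => Finset.sum_nonneg fun c _ => mul_nonneg (hw₁ _) (hw₂ _)
  -- union bound
  have hsub : P.filter (fun f => ∃ j, j ≠ s ∧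
        (∑ c : C, w₁ ((f s)⁻¹ c) * w₂ ((f s)⁻¹ c)) ≤ X j f) ⊆
      (Finset.univ.erase s).biUnion (fun j => P.filter (fun f => D ≤ X j f)) := by
    intro f hf
    obtain ⟨hfP, j, hjs, hle⟩ := Finset.mem_filter.1 hf
    rw [part1 f hfP] at hle
    exact Finset.mem_biUnion.2 ⟨j, Finset.mem_erase.2 ⟨hjs, Finset.mem_univ j⟩,
      Finset.mem_filter.2 ⟨hfP, hle⟩⟩
  -- per-j bound
  set B : ℝ := (T.card : ℝ) ^ (M - 1) * (Z₁ * Z₂) / D with hB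
  have hperj : ∀ j ∈ Finset.univ.erase s, ((P.filter (fun f => D ≤ X j f)).card : ℝ) ≤ B := by
    intro j hj
    have hjs : j ≠ s := (Finset.mem_erase.1 hj).1
    have hM2 : 2 ≤ M := by
      have h1 := j.isLt; have h2 := s.isLt
      have : j.val ≠ s.val := fun hv => hjs (Fin.ext hv)
      omega
    have hk : ((Finset.univ.erase j).erase s).card = M - 2 := by
      have hsmem : s ∈ (Finset.univ : Finset (Fin M)).erase j :=
        Finset.mem_erase.2 ⟨hjs.symm, Finset.mem_univ s⟩
      rw [Finset.card_erase_of_mem hsmem, Finset.card_erase_of_mem (Finset.mem_univ j)]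
      simp only [Finset.card_univ, Fintype.card_fin]
      omega
    have hsum : ∑ f ∈ P, X j f = (T.card : ℝ) ^ (M - 1) * (Z₁ * Z₂) := by
      rw [hX]
      rw [Finset.sum_comm]
      have : ∀ c : C, ∑ f ∈ P, w₁ ((f j)⁻¹ c) * w₂ ((f s)⁻¹ c)
          = (T.card : ℝ) ^ (M - 2) * (Z₁ * Z₂) := by
        intro c
        rw [aux_pair_sum T j s hjs (fun t => w₁ (t⁻¹ c)) (fun t => w₂ (t⁻¹ c)), hk,
          aux_sum_inv T hbij w₁ c, aux_sum_inv T hbij w₂ c]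
      rw [Finset.sum_congr rfl (fun c _ => this c), Finset.sum_const, Finset.card_univ,
        ← hcard, nsmul_eq_mul]
      have hp : (T.card : ℝ) * (T.card : ℝ) ^ (M - 2) = (T.card : ℝ) ^ (M - 1) := by
        rw [← pow_succ']
        congr 1
        omega
      rw [← mul_assoc, hp]
    have hmarkov : ((P.filter (fun f => D ≤ X j f)).card : ℝ) * D ≤ ∑ f ∈ P, X j f := by
      calc ((P.filter (fun f => D ≤ X j f)).card : ℝ) * D
          = ∑ _f ∈ P.filter (fun f => D ≤ X j f), D := by rw [Finset.sum_const, nsmul_eq_mul]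
        _ ≤ ∑ f ∈ P.filter (fun f => D ≤ X j f), X j f :=
            Finset.sum_le_sum fun f hf => (Finset.mem_filter.1 hf).2
        _ ≤ ∑ f ∈ P, X j f :=
            Finset.sum_le_sum_of_subset_of_nonneg (Finset.filter_subset _ _)
              (fun f _ _ => hXnonneg j f)
    rw [hB, le_div_iff₀ hΔ]
    exact hmarkov.trans_eq hsum
  -- combine
  have hcount : (((P.filter (fun f => ∃ j, j ≠ s ∧
        (∑ c : C, w₁ ((f s)⁻¹ c) * w₂ ((f s)⁻¹ c)) ≤ X j f)).card : ℝ)) ≤ ((M : ℝ) - 1) * B := by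
    calc (((P.filter (fun f => ∃ j, j ≠ s ∧
          (∑ c : C, w₁ ((f s)⁻¹ c) * w₂ ((f s)⁻¹ c)) ≤ X j f)).card : ℝ))
        ≤ (((Finset.univ.erase s).biUnion (fun j => P.filter (fun f => D ≤ X j f))).card : ℝ) := by
          exact_mod_cast Finset.card_le_card hsub
      _ ≤ ∑ j ∈ Finset.univ.erase s, ((P.filter (fun f => D ≤ X j f)).card : ℝ) := by
          exact_mod_cast Finset.card_biUnion_le
      _ ≤ ∑ _j ∈ Finset.univ.erase s, B := Finset.sum_le_sum hperj
      _ = ((M : ℝ) - 1) * B := by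
          rw [Finset.sum_const, nsmul_eq_mul, Finset.card_erase_of_mem (Finset.mem_univ s)]
          congr 1
          simp [Nat.cast_sub hMpos]
  -- final arithmetic
  have hTpow : (0 : ℝ) < (T.card : ℝ) ^ M := by positivity
  rw [div_le_div_iff₀ hTpow (by positivity)]
  have hM1 : (0 : ℝ) ≤ (M : ℝ) - 1 := by
    have : (1 : ℝ) ≤ M := by exact_mod_cast hMpos
    linarith
  have hBval : ((M : ℝ) - 1) * B * ((Fintype.card C : ℝ) * D)
      = ((M : ℝ) - 1) * Z₁ * Z₂ * (T.card : ℝ) ^ M := by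
    rw [hB, ← hcard]
    have hpow : (T.card : ℝ) ^ (M - 1) * (T.card : ℝ) = (T.card : ℝ) ^ M := by
      rw [← pow_succ]
      congr 1
      omega
    field_simp
    rw [← hpow]
    ring
  calc (((P.filter (fun f => ∃ j, j ≠ s ∧
        (∑ c : C, w₁ ((f s)⁻¹ c) * w₂ ((f s)⁻¹ c)) ≤ X j f)).card : ℝ))
        * ((Fintype.card C : ℝ) * D)
      ≤ ((M : ℝ) - 1) * B * ((Fintype.card C : ℝ) * D) := by
        apply mul_le_mul_of_nonneg_right hcount (by positivity)
    _ = ((M : ℝ) - 1) * Z₁ * Z₂ * (T.card : ℝ) ^ M := hBval
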